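/- Let p be a prime, n ≥ 1, and R a commutative ring in which p^n = 0. Then for every x ∈ Ŵ(R) there exists y ∈ Ŵ(R) such that p^n · x = verschiebung y; that is, p^n · Ŵ(R) ⊆ verschiebung(Ŵ(R)). -/

import Mathlib

open WittVector

/-- `Ŵ(R)`: the set of Witt vectors all of whose coefficients are nilpotent and all but
finitely many of whose coefficients are zero. -/
def wittHat (p : ℕ) (R : Type*) [CommRing R] : Set (WittVector p R) :=
  {x | (∀ i, IsNilpotent (x.coeff i)) ∧ {i | x.coeff i ≠ 0}.Finite}

namespace WittHatAux

open MvPolynomial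

variable (p : ℕ) [hp : Fact p.Prime]

/-- The Witt vector with `i`-th coefficient `r ^ p ^ i * x.coeff i`. -/
noncomputable def scaledAux {R : Type*} [CommRing R] (r : R) (x : WittVector p R) :
    WittVector p R :=
  WittVector.mk p fun i => r ^ p ^ i * x.coeff i

theorem coeff_scaledAux {R : Type*} [CommRing R] (r : R) (x : WittVector p R) (i : ℕ) :
    (scaledAux p r x).coeff i = r ^ p ^ i * x.coeff i := rfl

theorem ghostComponent_scaledAux {R : Type*} [CommRing R] (r : R) (x : WittVector p R) (n : ℕ) :
    ghostComponent n (scaledAux p r x) = r ^ p ^ n * ghostComponent n x := by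
  simp only [ghostComponent_apply, aeval_wittPolynomial]
  rw [Finset.mul_sum]
  refine Finset.sum_congr rfl fun i hi => ?_
  have hin : i ≤ n := Nat.lt_succ_iff.mp (Finset.mem_range.mp hi)
  rw [coeff_scaledAux, mul_pow, ← pow_mul, ← pow_add]
  rw [Nat.add_sub_cancel' hin]
  ring

theorem map_scaledAux {R S : Type*} [CommRing R] [CommRing S] (f : R →+* S) (r : R)
    (x : WittVector p R) :
    WittVector.map f (scaledAux p r x) = scaledAux p (f r) (WittVector.map f x) := by
  apply WittVector.ext
  intro n
  simp only [WittVector.map_coeff, coeff_scaledAux, map_mul, map_pow]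

theorem teichmuller_mul_aux1 {K : Type*} [CommRing K] [Invertible (p : K)] (r : K)
    (x : WittVector p K) : teichmuller p r * x = scaledAux p r x := by
  apply (ghostMap.bijective_of_invertible p K).1
  funext n
  simp only [ghostMap_apply, RingHom.map_mul]
  rw [ghostComponent_scaledAux, ghostComponent_teichmuller]

theorem teichmuller_mul_aux2 {σ : Type*} (r : MvPolynomial σ ℤ)
    (x : WittVector p (MvPolynomial σ ℤ)) : teichmuller p r * x = scaledAux p r x := by
  refine WittVector.map_injective (MvPolynomial.map (Int.castRingHom ℚ))
    (MvPolynomial.map_injective _ Int.cast_injective) ?_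
  rw [RingHom.map_mul, map_teichmuller, map_scaledAux, teichmuller_mul_aux1]

theorem teichmuller_mul {R : Type*} [CommRing R] (r : R) (x : WittVector p R) :
    teichmuller p r * x = scaledAux p r x := by
  let φ : MvPolynomial (Option ℕ) ℤ →+* R :=
    (MvPolynomial.aeval (fun o : Option ℕ => o.elim r fun i => x.coeff i)).toRingHom
  have hr : φ (X none) = r := by simp [φ]
  have hx : WittVector.map φ (WittVector.mk p fun i => X (some i)) = x := by
    apply WittVector.ext
    intro n
    simp [WittVector.map_coeff, WittVector.coeff_mk, φ]
  calc teichmuller p r * x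
      = WittVector.map φ (teichmuller p (X none) * WittVector.mk p fun i => X (some i)) := by
        rw [RingHom.map_mul, map_teichmuller, hr, hx]
    _ = WittVector.map φ (scaledAux p (X none) (WittVector.mk p fun i => X (some i))) := by
        rw [teichmuller_mul_aux2]
    _ = scaledAux p r x := by rw [map_scaledAux, hr, hx]

theorem teichmuller_mul_coeff {R : Type*} [CommRing R] (r : R) (x : WittVector p R) (i : ℕ) :
    (teichmuller p r * x).coeff i = r ^ p ^ i * x.coeff i := by
  rw [teichmuller_mul]; rfl

/-- Evaluating an integral polynomial with zero constant term at values in a set closed under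
`0`, `+`, `*` and `ℤ`-scalar multiplication lands in that set. -/
theorem aeval_sub_constantCoeff_mem {S : Type*} [CommRing S] (T : Set S) (h0 : (0 : S) ∈ T)
    (hadd : ∀ a b, a ∈ T → b ∈ T → a + b ∈ T)
    (hmul : ∀ a b, a ∈ T → b ∈ T → a * b ∈ T)
    (hsmul : ∀ (n : ℤ) a, a ∈ T → n • a ∈ T)
    {σ : Type*} (v : σ → S) (hv : ∀ i, v i ∈ T) (f : MvPolynomial σ ℤ) :
    MvPolynomial.aeval v f - algebraMap ℤ S (MvPolynomial.constantCoeff f) ∈ T := by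
  induction f using MvPolynomial.induction_on with
  | C a => simpa using h0
  | add f g hf hg =>
      have := hadd _ _ hf hg
      convert this using 1
      simp only [map_add]
      ring
  | mul_X f i hf =>
      have key : MvPolynomial.aeval v (f * X i)
          = (MvPolynomial.aeval v f - algebraMap ℤ S (MvPolynomial.constantCoeff f)) * v i
            + (MvPolynomial.constantCoeff f) • v i := by
        simp only [map_mul, MvPolynomial.aeval_X, zsmul_eq_mul]
        have : (algebraMap ℤ S) (MvPolynomial.constantCoeff f)
            = ((MvPolynomial.constantCoeff f : ℤ) : S) := by
          simp [algebraMap_int_eq, eq_intCast]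
        rw [this]
        ring
      have hmem : MvPolynomial.aeval v (f * X i) ∈ T := by
        rw [key]
        exact hadd _ _ (hmul _ _ hf (hv i)) (hsmul _ _ (hv i))
      have hc : MvPolynomial.constantCoeff (f * X i) = 0 := by
        simp [map_mul]
      simpa [hc] using hmem

theorem constantCoeff_wittMulN (n k : ℕ) :
    MvPolynomial.constantCoeff (wittMulN p n k) = 0 := by
  have h := WittVector.mulN_coeff (p := p) (R := ℤ) n 0 k
  rw [zero_mul, WittVector.zero_coeff] at h
  have hz : ((0 : WittVector p ℤ).coeff) = fun _ : ℕ => (0 : ℤ) := by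
    funext i; exact WittVector.zero_coeff p ℤ i
  rw [hz, MvPolynomial.aeval_zero'] at h
  simpa using h.symm

theorem isNilpotent_span_finset {R : Type*} [CommRing R] (s : Finset R)
    (h : ∀ a ∈ s, IsNilpotent a) : IsNilpotent (Ideal.span (s : Set R)) := by
  classical
  induction s using Finset.induction_on with
  | empty =>
      refine ⟨1, ?_⟩
      simp [Ideal.span_empty]
  | @insert a s ha ih =>
      have h1 : IsNilpotent (Ideal.span ({a} : Set R)) := by
        obtain ⟨k, hk⟩ := h a (Finset.mem_insert_self a s)
        refine ⟨k, ?_⟩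
        rw [Ideal.span_singleton_pow, hk]
        simp
      have h2 : IsNilpotent (Ideal.span (s : Set R)) :=
        ih fun b hb => h b (Finset.mem_insert_of_mem hb)
      have : Ideal.span ((insert a s : Finset R) : Set R)
          = Ideal.span ({a} : Set R) + Ideal.span (s : Set R) := by
        rw [Finset.coe_insert, Ideal.span_insert, Submodule.add_eq_sup]
      rw [this]
      exact Commute.isNilpotent_add (Commute.all _ _) h1 h2

end WittHatAux

open WittHatAux

/-- If `p^n = 0` in `R` (with `n ≥ 1`), then `p^n · Ŵ(R) ⊆ verschiebung (Ŵ(R))`. -/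
theorem pow_mul_wittHat_subset_verschiebung (p : ℕ) [Fact p.Prime] (n : ℕ) (hn : 1 ≤ n)
    (R : Type*) [CommRing R] (hp : (p : R) ^ n = 0) :
    ∀ x ∈ wittHat p R, ∃ y ∈ wittHat p R,
      (p : WittVector p R) ^ n * x = WittVector.verschiebung y := by
  classical
  rintro x ⟨hnil, hfin⟩
  have hp2 : 2 ≤ p := (Fact.out : p.Prime).two_le
  -- support bound
  set N : ℕ := hfin.toFinset.sup id + 1 with hN
  have hsupp : ∀ i, N ≤ i → x.coeff i = 0 := by
    intro i hi
    by_contra hne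
    have : i ∈ hfin.toFinset := by simpa using hne
    have : i ≤ hfin.toFinset.sup id := Finset.le_sup (f := id) this
    omega
  -- the ideal generated by the coefficients
  set J : Ideal R := Ideal.span ((Finset.image x.coeff (Finset.range N) : Finset R) : Set R)
    with hJ
  have hcoeff_memJ : ∀ i, x.coeff i ∈ J := by
    intro i
    by_cases hi : i < N
    · apply Ideal.subset_span
      simp only [Finset.coe_image, Finset.coe_range, Set.mem_image, Set.mem_Iio]
      exact ⟨i, hi, rfl⟩
    · rw [hsupp i (le_of_not_gt hi)]; exact J.zero_mem
  have hJnil : IsNilpotent J := by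
    apply isNilpotent_span_finset
    intro a ha
    obtain ⟨i, _, rfl⟩ := Finset.mem_image.mp ha
    exact hnil i
  obtain ⟨M, hM⟩ := hJnil
  have hJle : J ≤ nilradical R := by
    rw [hJ, Ideal.span_le]
    intro a ha
    obtain ⟨i, _, rfl⟩ := Finset.mem_image.mp (by exact_mod_cast ha)
    exact mem_nilradical.mpr (hnil i)
  -- the weight
  set w : ℕ := p ^ (N - 1) with hw
  have hw0 : 0 < w := pow_pos (by omega) _
  -- the filtered set in R[X]
  set T : Set (Polynomial R) := {f | ∀ e, f.coeff e ∈ J ^ (e ⌈/⌉ w)} with hT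
  have hT0 : (0 : Polynomial R) ∈ T := fun e => by simp
  have hTadd : ∀ a b, a ∈ T → b ∈ T → a + b ∈ T := by
    intro a b haT hbT e
    rw [Polynomial.coeff_add]
    exact Ideal.add_mem _ (haT e) (hbT e)
  have hTsmul : ∀ (m : ℤ) a, a ∈ T → m • a ∈ T := by
    intro m a haT e
    rw [Polynomial.coeff_smul]
    exact zsmul_mem (haT e) m
  have hTmul : ∀ a b, a ∈ T → b ∈ T → a * b ∈ T := by
    intro a b haT hbT e
    rw [Polynomial.coeff_mul]
    refine Ideal.sum_mem _ ?_
    rintro ⟨c, d⟩ hcd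
    have hcd' : c + d = e := Finset.HasAntidiagonal.mem_antidiagonal.mp hcd
    have hle : e ⌈/⌉ w ≤ c ⌈/⌉ w + d ⌈/⌉ w := by
      rw [ceilDiv_le_iff_le_mul hw0]
      have h1 : c ≤ w * (c ⌈/⌉ w) := by
        simpa [smul_eq_mul] using le_smul_ceilDiv (b := c) hw0
      have h2 : d ≤ w * (d ⌈/⌉ w) := by
        simpa [smul_eq_mul] using le_smul_ceilDiv (b := d) hw0
      calc e = c + d := hcd'.symm
        _ ≤ w * (c ⌈/⌉ w) + w * (d ⌈/⌉ w) := Nat.add_le_add h1 h2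
        _ = w * (c ⌈/⌉ w + d ⌈/⌉ w) := by ring
    have : (a.coeff c) * (b.coeff d) ∈ J ^ (c ⌈/⌉ w) * J ^ (d ⌈/⌉ w) :=
      Ideal.mul_mem_mul (haT c) (hbT d)
    rw [← pow_add] at this
    exact Ideal.pow_le_pow_right hle this
  -- the scaled Witt vector
  set z : WittVector p (Polynomial R) :=
    teichmuller p (Polynomial.X : Polynomial R) * WittVector.map (Polynomial.C) x with hz
  have hzcoeff : ∀ i, z.coeff i = Polynomial.C (x.coeff i) * Polynomial.X ^ p ^ i := by
    intro i
    rw [hz, teichmuller_mul_coeff, WittVector.map_coeff]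
    ring
  have hzT : ∀ i, z.coeff i ∈ T := by
    intro i e
    rw [hzcoeff, Polynomial.coeff_C_mul_X_pow]
    split_ifs with he
    · by_cases hi : i < N
      · have h1 : e ⌈/⌉ w ≤ 1 := by
          rw [ceilDiv_le_iff_le_mul hw0, he, mul_one, hw]
          exact Nat.pow_le_pow_right (by omega) (by omega)
        refine Ideal.pow_le_pow_right h1 ?_
        rw [pow_one]
        exact hcoeff_memJ i
      · rw [hsupp i (le_of_not_gt hi)]
        exact Submodule.zero_mem _
    · exact Submodule.zero_mem _
  -- the product
  set K : ℕ := p ^ n with hK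
  set u : WittVector p R := x * (K : WittVector p R) with hu
  have hucoeff : ∀ m, u.coeff m ∈ J ^ (p ^ m ⌈/⌉ w) := by
    intro m
    -- `z * K` in `𝕎 R[X]`
    have h1 : (z * (K : WittVector p (Polynomial R))).coeff m
        = MvPolynomial.aeval z.coeff (wittMulN p K m) := WittVector.mulN_coeff K z m
    have h2 : (z * (K : WittVector p (Polynomial R))).coeff m ∈ T := by
      rw [h1]
      have := aeval_sub_constantCoeff_mem T hT0 hTadd hTmul hTsmul z.coeff hzT
        (wittMulN p K m)
      rw [constantCoeff_wittMulN] at this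
      simp only [map_zero, sub_zero] at this
      convert this
      · exact Subsingleton.elim _ _
      · exact Subsingleton.elim _ _
      · rfl
      · exact Subsingleton.elim _ _
    have h3 : z * (K : WittVector p (Polynomial R))
        = teichmuller p (Polynomial.X : Polynomial R) * WittVector.map (Polynomial.C) u := by
      rw [hz, hu, RingHom.map_mul, mul_assoc]
      congr 1
      congr 1
      exact (map_natCast (WittVector.map (Polynomial.C (R := R))) K).symm
    have h4 : (z * (K : WittVector p (Polynomial R))).coeff m
        = Polynomial.C (u.coeff m) * Polynomial.X ^ p ^ m := by
      rw [h3, teichmuller_mul_coeff, WittVector.map_coeff]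
      ring
    have h5 := h2 (p ^ m)
    rw [h4, Polynomial.coeff_C_mul_X_pow] at h5
    simpa using h5
  have hu0 : u.coeff 0 = 0 := by
    have : WittVector.constantCoeff u = 0 := by
      rw [hu, map_mul, map_natCast, hK]
      push_cast
      rw [hp, mul_zero]
    simpa using this
  have huN : ∀ m, M + N ≤ m → u.coeff m = 0 := by
    intro m hm
    have hwM : w * M ≤ p ^ m := by
      have h1 : M < p ^ M := Nat.lt_pow_self (by omega)
      calc w * M ≤ p ^ (N - 1) * p ^ M := Nat.mul_le_mul_left _ (le_of_lt h1)
        _ = p ^ (N - 1 + M) := (pow_add p _ _).symm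
        _ ≤ p ^ m := Nat.pow_le_pow_right (by omega) (by omega)
    have hle : M ≤ p ^ m ⌈/⌉ w := by
      have h2 : p ^ m ≤ w * (p ^ m ⌈/⌉ w) := by
        simpa [smul_eq_mul] using le_smul_ceilDiv (b := p ^ m) hw0
      exact Nat.le_of_mul_le_mul_left (le_trans hwM h2) hw0
    have : J ^ (p ^ m ⌈/⌉ w) ≤ J ^ M := Ideal.pow_le_pow_right hle
    have h0 : u.coeff m ∈ J ^ M := this (hucoeff m)
    rw [hM] at h0
    simpa using h0
  have hunil : ∀ m, IsNilpotent (u.coeff m) := by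
    intro m
    have h1 : 1 ≤ p ^ m ⌈/⌉ w := by
      by_contra hcon
      have h0 : p ^ m ⌈/⌉ w = 0 := by omega
      have h2 := le_smul_ceilDiv (b := p ^ m) hw0
      rw [h0] at h2
      simp only [smul_zero] at h2
      have h3 : 0 < p ^ m := pow_pos (by omega) m
      omega
    have h2 : J ^ (p ^ m ⌈/⌉ w) ≤ J := by
      have := Ideal.pow_le_pow_right (I := J) h1
      rwa [pow_one] at this
    exact mem_nilradical.mp (hJle (h2 (hucoeff m)))
  -- construct y
  refine ⟨WittVector.mk p fun i => u.coeff (i + 1), ⟨?_, ?_⟩, ?_⟩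
  · intro i
    exact hunil (i + 1)
  · apply Set.Finite.subset (Finset.finite_toSet (Finset.range (M + N)))
    intro i hi
    simp only [Finset.coe_range, Set.mem_Iio]
    by_contra hcon
    exact hi (huN (i + 1) (by omega))
  · have hxu : (p : WittVector p R) ^ n * x = u := by
      rw [hu, hK]
      push_cast
      ring
    rw [hxu]
    apply WittVector.ext
    intro m
    cases m with
    | zero => rw [WittVector.verschiebung_coeff_zero, hu0]
    | succ m => rw [WittVector.verschiebung_coeff_succ]; rfl
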